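/- Let X, Y be Banach spaces, U ⊆ X open, F : U → Y continuously differentiable, x₀ ∈ U, and suppose D = dF(x₀) is surjective with a bounded linear right inverse Q : Y → X with ‖Q‖ ≤ c. Suppose there is δ > 0 with the closed ball B_δ(x₀) ⊆ U such that ‖dF(x) − D‖ ≤ 1/(2c) for all x ∈ B_δ(x₀), and suppose ‖F(x₀)‖ ≤ δ/(4c). Then there exists x ∈ B_δ(x₀) with F(x) = 0, x − x₀ ∈ range(Q), and ‖x − x₀‖ ≤ 2c‖F(x₀)‖. -/

import Mathlib

/-- Quantitative implicit function theorem with a bounded right inverse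
(Proposition A.3.4 of McDuff–Salamon). -/
theorem implicit_function_with_right_inverse
    {X Y : Type*} [NormedAddCommGroup X] [NormedSpace ℝ X] [CompleteSpace X]
    [NormedAddCommGroup Y] [NormedSpace ℝ Y] [CompleteSpace Y]
    (U : Set X) (hU : IsOpen U) (F : X → Y) (dF : X → X →L[ℝ] Y)
    (hdF : ∀ x ∈ U, HasFDerivAt F (dF x) x)
    (hdFcont : ContinuousOn dF U)
    (x₀ : X) (hx₀ : x₀ ∈ U)
    (hsurj : Function.Surjective (dF x₀))
    (Q : Y →L[ℝ] X) (hQright : ∀ y : Y, dF x₀ (Q y) = y)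
    (c : ℝ) (hc : 0 < c) (hQ : ‖Q‖ ≤ c)
    (δ : ℝ) (hδ : 0 < δ) (hball : Metric.closedBall x₀ δ ⊆ U)
    (hder : ∀ x ∈ Metric.closedBall x₀ δ, ‖dF x - dF x₀‖ ≤ 1 / (2 * c))
    (hF₀ : ‖F x₀‖ ≤ δ / (4 * c)) :
    ∃ x ∈ Metric.closedBall x₀ δ,
      F x = 0 ∧ x - x₀ ∈ Set.range Q ∧ ‖x - x₀‖ ≤ 2 * c * ‖F x₀‖ := by
  set r : ℝ := 2 * ‖F x₀‖ with hr
  have hr0 : 0 ≤ r := by positivity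
  -- key mean value estimate
  have key : ∀ x ∈ Metric.closedBall x₀ δ, ∀ x' ∈ Metric.closedBall x₀ δ,
      ‖F x - F x' - dF x₀ (x - x')‖ ≤ (1/(2*c)) * ‖x - x'‖ := by
    intro x hx x' hx'
    have hG : ∀ z ∈ Metric.closedBall x₀ δ,
        HasFDerivWithinAt (fun z => F z - dF x₀ z) (dF z - dF x₀)
          (Metric.closedBall x₀ δ) z := fun z hz =>
      (((hdF z (hball hz)).sub (dF x₀).hasFDerivAt)).hasFDerivWithinAt
    have h := (convex_closedBall x₀ δ).norm_image_sub_le_of_norm_hasFDerivWithin_le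
      hG (fun z hz => hder z hz) hx' hx
    have heq : (F x - dF x₀ x) - (F x' - dF x₀ x') = F x - F x' - dF x₀ (x - x') := by
      rw [map_sub]; abel
    simpa [heq] using h
  -- the ball in Y stays in the domain ball
  have hQball : ∀ y : Y, ‖y‖ ≤ r → x₀ + Q y ∈ Metric.closedBall x₀ δ := by
    intro y hy
    have h1 : ‖Q y‖ ≤ c * ‖y‖ := Q.le_opNorm y |>.trans (by
      exact mul_le_mul_of_nonneg_right hQ (norm_nonneg y))
    have h2 : c * ‖y‖ ≤ c * r := mul_le_mul_of_nonneg_left hy hc.le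
    have h3 : c * r ≤ δ / 2 := by
      have : ‖F x₀‖ ≤ δ / (4 * c) := hF₀
      rw [hr]
      calc c * (2 * ‖F x₀‖) ≤ c * (2 * (δ / (4 * c))) := by
            apply mul_le_mul_of_nonneg_left _ hc.le
            linarith
        _ = δ / 2 := by field_simp; ring
    simp only [Metric.mem_closedBall, dist_eq_norm]
    have : x₀ + Q y - x₀ = Q y := by abel
    rw [this]
    linarith
  set g : Y → Y := fun y => y - F (x₀ + Q y) with hg
  -- contraction estimate
  have hlip : ∀ y : Y, ‖y‖ ≤ r → ∀ y' : Y, ‖y'‖ ≤ r →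
      ‖g y - g y'‖ ≤ (1/2) * ‖y - y'‖ := by
    intro y hy y' hy'
    have hx : x₀ + Q y ∈ Metric.closedBall x₀ δ := hQball y hy
    have hx' : x₀ + Q y' ∈ Metric.closedBall x₀ δ := hQball y' hy'
    have hdiff : (x₀ + Q y) - (x₀ + Q y') = Q (y - y') := by
      rw [map_sub]; abel
    have hDy : dF x₀ ((x₀ + Q y) - (x₀ + Q y')) = y - y' := by
      rw [hdiff, hQright]
    have hgdiff : g y - g y' =
        -(F (x₀ + Q y) - F (x₀ + Q y') - dF x₀ ((x₀ + Q y) - (x₀ + Q y'))) := by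
      rw [hDy]; simp only [hg]; abel
    rw [hgdiff, norm_neg]
    calc ‖F (x₀ + Q y) - F (x₀ + Q y') - dF x₀ ((x₀ + Q y) - (x₀ + Q y'))‖
        ≤ (1/(2*c)) * ‖(x₀ + Q y) - (x₀ + Q y')‖ := key _ hx _ hx'
      _ = (1/(2*c)) * ‖Q (y - y')‖ := by rw [hdiff]
      _ ≤ (1/(2*c)) * (c * ‖y - y'‖) := by
          apply mul_le_mul_of_nonneg_left _ (by positivity)
          exact (Q.le_opNorm _).trans
            (mul_le_mul_of_nonneg_right hQ (norm_nonneg _))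
      _ = (1/2) * ‖y - y'‖ := by field_simp
  -- g maps the ball to itself
  have hg0 : g 0 = -F x₀ := by simp [hg]
  have hmaps : ∀ y : Y, ‖y‖ ≤ r → ‖g y‖ ≤ r := by
    intro y hy
    have h1 : ‖g y - g 0‖ ≤ (1/2) * ‖y - 0‖ := hlip y hy 0 (by simpa using hr0)
    have h2 : ‖g y‖ ≤ ‖g y - g 0‖ + ‖g 0‖ := by
      have := norm_add_le (g y - g 0) (g 0); simpa using this
    have h3 : ‖g 0‖ = ‖F x₀‖ := by rw [hg0, norm_neg]
    simp only [sub_zero] at h1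
    rw [hr]; linarith
  -- contraction on the closed ball as a subtype
  set s : Set Y := Metric.closedBall (0:Y) r with hs
  have hmem : ∀ y : Y, y ∈ s ↔ ‖y‖ ≤ r := by
    intro y; simp [hs, Metric.mem_closedBall, dist_eq_norm]
  haveI : CompleteSpace s := Metric.isClosed_closedBall.completeSpace_coe
  haveI : Nonempty s := ⟨⟨0, by simp [hs, hr0]⟩⟩
  set gg : s → s := fun y => ⟨g y.1, (hmem _).2 (hmaps y.1 ((hmem _).1 y.2))⟩ with hgg
  have hcontr : ContractingWith (1/2 : NNReal) gg := by
    constructor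
    · have h : ((1/2 : NNReal) : ℝ) < ((1 : NNReal) : ℝ) := by norm_num
      exact_mod_cast h
    · apply LipschitzWith.of_dist_le_mul
      intro a b
      simp only [hgg, Subtype.dist_eq, dist_eq_norm]
      have := hlip a.1 ((hmem _).1 a.2) b.1 ((hmem _).1 b.2)
      push_cast
      linarith
  set yf : s := ContractingWith.fixedPoint gg hcontr with hyf
  have hfix : gg yf = yf := hcontr.fixedPoint_isFixedPt
  have hgy : g yf.1 = yf.1 := congrArg Subtype.val hfix
  have hFzero : F (x₀ + Q yf.1) = 0 := by
    have h : yf.1 - F (x₀ + Q yf.1) = yf.1 := hgy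
    have := sub_eq_self.mp h
    exact this
  have hynorm : ‖yf.1‖ ≤ r := (hmem _).1 yf.2
  refine ⟨x₀ + Q yf.1, hQball _ hynorm, hFzero, ?_, ?_⟩
  · exact ⟨yf.1, by abel⟩
  · have h1 : ‖Q yf.1‖ ≤ c * ‖yf.1‖ := (Q.le_opNorm _).trans
      (mul_le_mul_of_nonneg_right hQ (norm_nonneg _))
    have h2 : c * ‖yf.1‖ ≤ c * r := mul_le_mul_of_nonneg_left hynorm hc.le
    have heq : x₀ + Q yf.1 - x₀ = Q yf.1 := by abel
    rw [heq, hr] at *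
    calc ‖Q yf.1‖ ≤ c * (2 * ‖F x₀‖) := h1.trans h2
      _ = 2 * c * ‖F x₀‖ := by ring
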